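/- Let L ∈ 𝐋^reg and let V, W ∈ 𝐕(L) satisfy d_ABW(L+uV, L+uW) = 0 for all u ∈ [0,1]. Then V = W. That is, for regular L, the matrix V ∈ 𝐕(L) representing a given constant speed geodesic u ↦ [L+uV] emanating from [L] is unique. -/

import Mathlib

open Matrix Filter Topology

/-- Square matrices of size `dT × dT`, indexed by blocks: index `(t, i)` is
row/column `i` within block `t`. -/
abbrev Mat (d T : ℕ) := Matrix (Fin T × Fin d) (Fin T × Fin d) ℝ

/-- The `t`-th diagonal `d × d` block of a `dT × dT` matrix. -/
def blk {d T : ℕ} (A : Mat d T) (t : Fin T) : Matrix (Fin d) (Fin d) ℝ :=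
  fun i j => A (t, i) (t, j)

/-- The `t`-th block column of a `dT × dT` matrix, a `dT × d` matrix. -/
def colBlk {d T : ℕ} (A : Mat d T) (t : Fin T) : Matrix (Fin T × Fin d) (Fin d) ℝ :=
  fun p j => A p (t, j)

/-- Membership in `𝐋`: block lower triangular matrices. -/
def memL {d T : ℕ} (A : Mat d T) : Prop :=
  ∀ (t s : Fin T) (i j : Fin d), t < s → A (t, i) (s, j) = 0

/-- Membership in `𝐎`: block diagonal matrices with orthogonal `d × d` diagonal blocks
(equivalently: block diagonal and orthogonal). -/
def memO {d T : ℕ} (O : Mat d T) : Prop :=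
  (∀ (t s : Fin T) (i j : Fin d), t ≠ s → O (t, i) (s, j) = 0) ∧ Oᵀ * O = 1

/-- The Frobenius norm of a real matrix. -/
noncomputable def frobNorm {m n : Type*} [Fintype m] [Fintype n] (A : Matrix m n ℝ) : ℝ :=
  Real.sqrt (∑ i, ∑ j, (A i j) ^ 2)

/-- The Frobenius inner product of two real matrices. -/
noncomputable def frobInner {m n : Type*} [Fintype m] [Fintype n] (A B : Matrix m n ℝ) : ℝ :=
  ∑ i, ∑ j, A i j * B i j

/-- The adapted Bures–Wasserstein distance `d_ABW(L, M) = inf_{O ∈ 𝐎} ‖L - M O‖_F`. -/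
noncomputable def dABW {d T : ℕ} (L M : Mat d T) : ℝ :=
  sInf {r : ℝ | ∃ O : Mat d T, memO O ∧ r = frobNorm (L - M * O)}

/-- The set `𝐎*(L, M)` of optimizers of `inf_{O ∈ 𝐎} ‖L - M O‖_F`. -/
noncomputable def OStar {d T : ℕ} (L M : Mat d T) : Set (Mat d T) :=
  {O | memO O ∧ frobNorm (L - M * O) = dABW L M}

/-- The set `𝐕(L) = {M P - L : M ∈ 𝐋, P ∈ 𝐎*(L, M)}`. -/
noncomputable def VSet {d T : ℕ} (L : Mat d T) : Set (Mat d T) :=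
  {V | ∃ M P : Mat d T, memL M ∧ P ∈ OStar L M ∧ V = M * P - L}

/-- The set `𝒱(L) = {V ∈ 𝐋 : (Vᵀ L)_{t,t} is symmetric for all t}`. -/
def calV {d T : ℕ} (L : Mat d T) : Set (Mat d T) :=
  {V | memL V ∧ ∀ t : Fin T, (blk (Vᵀ * L) t).IsSymm}

/-- The set `𝐋^reg = {L ∈ 𝐋 : (Lᵀ L)_{t,t} is positive definite for all t}`. -/
def LReg {d T : ℕ} : Set (Mat d T) :=
  {L | memL L ∧ ∀ t : Fin T, (blk (Lᵀ * L) t).PosDef}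

/-- The sum of the singular values of a real square matrix `A`,
i.e. the trace of the positive semidefinite square root of `Aᵀ A`. -/
noncomputable def svSum {n : ℕ} (A : Matrix (Fin n) (Fin n) ℝ) : ℝ :=
  ((Matrix.posSemidef_conjTranspose_mul_self A).isHermitian.eigenvectorUnitary.1 *
    diagonal (fun i => Real.sqrt
      ((Matrix.posSemidef_conjTranspose_mul_self A).isHermitian.eigenvalues i)) *
    (star (Matrix.posSemidef_conjTranspose_mul_self A).isHermitian.eigenvectorUnitary :
      Matrix (Fin n) (Fin n) ℝ)).trace

/-- The operator norm of a real matrix: the supremum of the euclidean norm `‖A x‖₂`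
over the euclidean unit ball. -/
noncomputable def opNorm {m n : Type*} [Fintype m] [Fintype n] (A : Matrix m n ℝ) : ℝ :=
  sSup {r : ℝ | ∃ x : n → ℝ, (∑ j, (x j) ^ 2) ≤ 1 ∧ r = Real.sqrt (∑ i, (A.mulVec x i) ^ 2)}

namespace Stmt12Aux

lemma sym_of_maximal {ι : Type*} [Fintype ι] [DecidableEq ι] (D : Matrix ι ι ℝ)
    (h : ∀ Q : Matrix ι ι ℝ, Qᵀ * Q = 1 → ∑ a, ∑ b, D a b * Q a b ≤ ∑ a, D a a) :
    ∀ i j, D i j = D j i := by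
  have ht : ∀ (p q : ι), (Matrix.single p q (1:ℝ))ᵀ = Matrix.single q p 1 := by
    intro p q; ext x y
    simp [Matrix.transpose_apply, Matrix.single, and_comm]
  have hD1 : ∑ x, ∑ y, D x y * (1 : Matrix ι ι ℝ) x y = ∑ x, D x x := by
    simp [Matrix.one_apply, mul_ite, Finset.sum_ite_eq']
  have hDE : ∀ (p q : ι) (x : ℝ), (∑ a', ∑ b', D a' b' * (x • Matrix.single p q (1:ℝ)) a' b')
      = x * D p q := by
    intro p q x
    simp [Matrix.smul_apply, Matrix.single, Matrix.of_apply, mul_ite, ite_and,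
      Finset.sum_ite_eq, Finset.sum_ite_eq', smul_eq_mul, mul_comm]
  intro i j
  rcases eq_or_ne i j with rfl | hij
  · rfl
  have hz1 : ∀ (p q : ι) (x y : ℝ),
      Matrix.single p i x * Matrix.single j q y = 0 := fun p q x y =>
    Matrix.single_mul_single_of_ne (c := x) p i j hij y
  have hz2 : ∀ (p q : ι) (x y : ℝ),
      Matrix.single p j x * Matrix.single i q y = 0 := fun p q x y =>
    Matrix.single_mul_single_of_ne (c := x) p j i hij.symm y
  have claim : ∀ c s : ℝ, c^2 + s^2 = 1 →
      (c - 1) * (D i i + D j j) + s * (D i j - D j i) ≤ 0 := by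
    intro c s hcs
    set Q : Matrix ι ι ℝ := 1 + (c - 1) • Matrix.single i i (1:ℝ)
        + (c - 1) • Matrix.single j j (1:ℝ)
        + s • Matrix.single i j (1:ℝ) - s • Matrix.single j i (1:ℝ) with hQdef
    have hQT : Qᵀ = 1 + (c - 1) • Matrix.single i i (1:ℝ)
        + (c - 1) • Matrix.single j j (1:ℝ)
        + s • Matrix.single j i (1:ℝ) - s • Matrix.single i j (1:ℝ) := by
      rw [hQdef]
      simp only [Matrix.transpose_sub, Matrix.transpose_add, Matrix.transpose_smul,
        Matrix.transpose_one, ht]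
    have hQorth : Qᵀ * Q = 1 := by
      rw [hQT, hQdef]
      simp only [add_mul, mul_add, sub_mul, mul_sub, one_mul, mul_one,
        Matrix.smul_mul, Matrix.mul_smul, smul_smul,
        Matrix.single_mul_single_same, hz1, hz2, mul_one, smul_zero]
      match_scalars <;> first | ring1 | linear_combination hcs
    have hsum : ∑ a', ∑ b', D a' b' * Q a' b'
        = (∑ x, D x x) + ((c - 1) * D i i + (c - 1) * D j j + s * D i j - s * D j i) := by
      rw [hQdef]
      simp only [Matrix.add_apply, Matrix.sub_apply, mul_add, mul_sub]
      simp only [Finset.sum_add_distrib, Finset.sum_sub_distrib]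
      rw [hD1, hDE, hDE, hDE, hDE]
      ring
    have hineq := h Q hQorth
    rw [hsum] at hineq
    linarith
  rw [← sub_eq_zero]
  by_contra hb0
  set a := D i i + D j j with ha
  set b := D i j - D j i with hbdef
  have hb : b ≠ 0 := hb0
  have hb2 : 0 < b^2 := by positivity
  have hab : 0 < a^2 + b^2 := by positivity
  set r := Real.sqrt (a^2 + b^2) with hrdef
  have hr2 : r^2 = a^2 + b^2 := Real.sq_sqrt (by positivity)
  have hr : 0 < r := Real.sqrt_pos.mpr hab
  have hcs : (a/r)^2 + (b/r)^2 = 1 := by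
    rw [div_pow, div_pow, ← add_div, ← hr2, div_self (by positivity)]
  have hkey := claim (a/r) (b/r) hcs
  have hmul := mul_le_mul_of_nonneg_right hkey hr.le
  have hexp : ((a/r - 1) * a + (b/r) * b) * r = a^2 + b^2 - a * r := by
    field_simp; ring
  rw [show ((a/r - 1) * (D i i + D j j) + (b/r) * (D i j - D j i)) * r
      = ((a/r - 1) * a + (b/r) * b) * r from by rw [← ha, ← hbdef], hexp, zero_mul] at hmul
  have h5 : 0 ≤ a - r := by nlinarith [hmul, hr2, hr]
  nlinarith [h5, hr, hr2, hb2]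


lemma N2_nonneg {m n : Type*} [Fintype m] [Fintype n] (A : Matrix m n ℝ) :
    0 ≤ ∑ i, ∑ j, (A i j)^2 :=
  Finset.sum_nonneg fun _ _ => Finset.sum_nonneg fun _ _ => sq_nonneg _

lemma frobNorm_nonneg' {m n : Type*} [Fintype m] [Fintype n] (A : Matrix m n ℝ) :
    0 ≤ frobNorm A := Real.sqrt_nonneg _

lemma abs_entry_le_frobNorm {m n : Type*} [Fintype m] [Fintype n] (A : Matrix m n ℝ)
    (i : m) (j : n) : |A i j| ≤ frobNorm A := by
  rw [frobNorm, ← Real.sqrt_sq_eq_abs]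
  apply Real.sqrt_le_sqrt
  calc (A i j)^2 ≤ ∑ j', (A i j')^2 :=
        Finset.single_le_sum (f := fun k => (A i k)^2) (fun k _ => sq_nonneg _) (Finset.mem_univ j)
    _ ≤ _ :=
        Finset.single_le_sum (f := fun i' => ∑ j', (A i' j')^2)
          (fun k _ => Finset.sum_nonneg fun l _ => sq_nonneg _) (Finset.mem_univ i)

variable {d T : ℕ}

lemma memO_one : memO (1 : Mat d T) := by
  refine ⟨fun t s i j hts => ?_, by rw [Matrix.transpose_one, Matrix.one_mul]⟩
  rw [Matrix.one_apply_ne]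
  exact fun hc => hts (congrArg Prod.fst hc)

lemma dABW_le {L M O : Mat d T} (hO : memO O) : dABW L M ≤ frobNorm (L - M * O) := by
  apply csInf_le
  · exact ⟨0, fun r ⟨O', hO', hr⟩ => hr ▸ Real.sqrt_nonneg _⟩
  · exact ⟨O, hO, rfl⟩

lemma exists_memO_close {A B : Mat d T} (h : dABW A B = 0) {ε : ℝ} (hε : 0 < ε) :
    ∃ O : Mat d T, memO O ∧ frobNorm (A - B * O) < ε := by
  have hne : {r : ℝ | ∃ O : Mat d T, memO O ∧ r = frobNorm (A - B * O)}.Nonempty :=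
    ⟨_, 1, memO_one, rfl⟩
  have hlt : sInf {r : ℝ | ∃ O : Mat d T, memO O ∧ r = frobNorm (A - B * O)} < ε := by
    have : dABW A B < ε := h ▸ hε
    exact this
  obtain ⟨r, ⟨O, hO, hr⟩, hrε⟩ := exists_lt_of_csInf_lt hne hlt
  exact ⟨O, hO, hr ▸ hrε⟩

lemma N2_eq_trace {m n : Type*} [Fintype m] [Fintype n] (A : Matrix m n ℝ) :
    ∑ i, ∑ j, (A i j)^2 = Matrix.trace (Aᵀ * A) := by
  rw [Matrix.trace]
  simp only [Matrix.diag_apply, Matrix.mul_apply, Matrix.transpose_apply]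
  rw [Finset.sum_comm]
  simp [sq]

lemma N2_mul_orth {M O : Mat d T} (hO : Oᵀ * O = 1) :
    ∑ i, ∑ j, ((M * O) i j)^2 = ∑ i, ∑ j, (M i j)^2 := by
  rw [N2_eq_trace, N2_eq_trace, Matrix.transpose_mul]
  have hOO : O * Oᵀ = 1 := mul_eq_one_comm.mp hO
  calc Matrix.trace (Oᵀ * Mᵀ * (M * O)) = Matrix.trace (M * O * (Oᵀ * Mᵀ)) :=
        Matrix.trace_mul_comm _ _
    _ = Matrix.trace (M * (O * Oᵀ) * Mᵀ) := by
        rw [Matrix.mul_assoc, Matrix.mul_assoc, Matrix.mul_assoc]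
    _ = Matrix.trace (Mᵀ * M) := by
        rw [hOO, Matrix.mul_one, Matrix.trace_mul_comm]

lemma frobInner_le_of_opt {L M P : Mat d T} (hP : P ∈ OStar L M) {O : Mat d T} (hO : memO O) :
    frobInner L (M * O) ≤ frobInner L (M * P) := by
  have h1 : frobNorm (L - M * P) ≤ frobNorm (L - M * O) := hP.2 ▸ dABW_le hO
  have h2 : ∑ i, ∑ j, ((L - M*P) i j)^2 ≤ ∑ i, ∑ j, ((L - M*O) i j)^2 := by
    have h3 := pow_le_pow_left₀ (Real.sqrt_nonneg _) h1 2
    simp only [frobNorm] at h3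
    rwa [Real.sq_sqrt (N2_nonneg _), Real.sq_sqrt (N2_nonneg _)] at h3
  have hexp : ∀ X : Mat d T, ∑ i, ∑ j, ((L - X) i j)^2
      = (∑ i, ∑ j, (L i j)^2) - 2 * frobInner L X + ∑ i, ∑ j, (X i j)^2 := by
    intro X
    rw [frobInner, Finset.mul_sum, ← Finset.sum_sub_distrib, ← Finset.sum_add_distrib]
    refine Finset.sum_congr rfl fun i _ => ?_
    rw [Finset.mul_sum, ← Finset.sum_sub_distrib, ← Finset.sum_add_distrib]
    refine Finset.sum_congr rfl fun j _ => ?_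
    simp only [Matrix.sub_apply]; ring
  rw [hexp, hexp, N2_mul_orth hO.2, N2_mul_orth hP.1.2] at h2
  linarith

def emb {d T : ℕ} (t : Fin T) (Q : Matrix (Fin d) (Fin d) ℝ) : Mat d T :=
  fun p q => if p.1 = t ∧ q.1 = t then Q p.2 q.2 else if p = q then 1 else 0

lemma emb_apply_t (t : Fin T) (Q : Matrix (Fin d) (Fin d) ℝ) (r : Fin T) (k i : Fin d) :
    emb t Q (r, k) (t, i) = if r = t then Q k i else 0 := by
  rcases eq_or_ne r t with rfl | hr
  · simp [emb]
  · simp [emb, hr, Prod.ext_iff]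

lemma emb_apply_ne (t : Fin T) (Q : Matrix (Fin d) (Fin d) ℝ) (x : Fin T × Fin d)
    {s : Fin T} (hs : s ≠ t) (i : Fin d) :
    emb t Q x (s, i) = if x = (s, i) then 1 else 0 := by
  simp [emb, hs]

lemma memO_emb (t : Fin T) {Q : Matrix (Fin d) (Fin d) ℝ} (hQ : Qᵀ * Q = 1) :
    memO (emb t Q) := by
  have hQ' : ∀ i j, (∑ k, Q k i * Q k j) = if i = j then 1 else 0 := by
    intro i j
    have h1 := congrFun (congrFun hQ i) j
    simpa [Matrix.mul_apply, Matrix.transpose_apply, Matrix.one_apply] using h1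
  constructor
  · rintro r s k i hrs
    have hnb : ¬(r = t ∧ s = t) := fun hh => hrs (hh.1.trans hh.2.symm)
    simp [emb, hnb, Prod.ext_iff, hrs]
  · ext ⟨s, i⟩ ⟨s', j⟩
    rw [Matrix.mul_apply]
    simp only [Matrix.transpose_apply]
    by_cases hs : s = t <;> by_cases hs' : s' = t
    · simp only [hs, hs']
      rw [Fintype.sum_prod_type]
      have hterm : ∀ r : Fin T, (∑ k, emb t Q (r, k) (t, i) * emb t Q (r, k) (t, j))
          = if r = t then (∑ k, Q k i * Q k j) else 0 := by
        intro r
        rcases eq_or_ne r t with rfl | hrs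
        · simp [emb_apply_t]
        · simp [emb_apply_t, hrs]
      rw [Finset.sum_congr rfl fun r _ => hterm r, Finset.sum_ite_eq' Finset.univ t _]
      simp [hQ', Matrix.one_apply, Prod.ext_iff, hs, hs']
    · simp only [hs]
      have hzero : ∀ x : Fin T × Fin d, emb t Q x (t, i) * emb t Q x (s', j) = 0 := by
        rintro ⟨r, k⟩
        rw [emb_apply_t, emb_apply_ne t Q _ hs' j]
        rcases eq_or_ne r t with rfl | hrs
        · have hne : ((r, k) : Fin T × Fin d) ≠ (s', j) :=
            fun hc => hs' ((congrArg Prod.fst hc).symm)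
          simp [hne]
        · simp [hrs]
      rw [Finset.sum_eq_zero fun x _ => hzero x]
      have hne2 : ((s, i) : Fin T × Fin d) ≠ (s', j) :=
        fun hc => hs' (((congrArg Prod.fst hc).symm).trans hs)
      rw [Matrix.one_apply_ne hne2]
    · simp only [hs']
      have hzero : ∀ x : Fin T × Fin d, emb t Q x (s, i) * emb t Q x (t, j) = 0 := by
        rintro ⟨r, k⟩
        rw [emb_apply_t, emb_apply_ne t Q _ hs i]
        rcases eq_or_ne r t with rfl | hrs
        · have hne : ((r, k) : Fin T × Fin d) ≠ (s, i) :=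
            fun hc => hs ((congrArg Prod.fst hc).symm)
          simp [hne]
        · simp [hrs]
      rw [Finset.sum_eq_zero fun x _ => hzero x]
      have hne2 : ((s, i) : Fin T × Fin d) ≠ (s', j) :=
        fun hc => hs ((congrArg Prod.fst hc).trans hs')
      rw [Matrix.one_apply_ne hne2]
    · have hterm : ∀ x : Fin T × Fin d,
          emb t Q x (s, i) * emb t Q x (s', j)
          = if x = (s, i) then (if ((s, i) : Fin T × Fin d) = (s', j) then 1 else 0) else 0 := by
        intro x
        rw [emb_apply_ne t Q x hs i, emb_apply_ne t Q x hs' j]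
        by_cases h1 : x = (s, i)
        · subst h1; simp
        · simp [h1]
      rw [Finset.sum_congr rfl fun x _ => hterm x, Finset.sum_ite_eq' Finset.univ _ _]
      simp [Matrix.one_apply]

lemma memO_mul {O₁ O₂ : Mat d T} (h₁ : memO O₁) (h₂ : memO O₂) : memO (O₁ * O₂) := by
  constructor
  · intro t s i j hts
    rw [Matrix.mul_apply]
    apply Finset.sum_eq_zero
    rintro ⟨r, k⟩ -
    rcases eq_or_ne r s with rfl | hr
    · rw [h₁.1 t r i k (fun hh => hts hh), zero_mul]
    · rw [h₂.1 r s k j hr, mul_zero]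
  · rw [Matrix.transpose_mul, Matrix.mul_assoc, ← Matrix.mul_assoc O₁ᵀ O₁ O₂, h₁.2,
      Matrix.one_mul, h₂.2]

lemma mul_emb_apply (N : Mat d T) (t : Fin T) (Q : Matrix (Fin d) (Fin d) ℝ)
    (p : Fin T × Fin d) (s : Fin T) (j : Fin d) :
    (N * emb t Q) p (s, j) = if s = t then ∑ k, N p (t, k) * Q k j else N p (s, j) := by
  rw [Matrix.mul_apply]
  by_cases hs : s = t
  · rw [if_pos hs]
    simp only [hs]
    rw [Fintype.sum_prod_type]
    have hterm : ∀ r : Fin T, (∑ k, N p (r, k) * emb t Q (r, k) (t, j))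
        = if r = t then ∑ k, N p (t, k) * Q k j else 0 := by
      intro r
      rcases eq_or_ne r t with rfl | hrs
      · simp [emb_apply_t]
      · simp [emb_apply_t, hrs]
    rw [Finset.sum_congr rfl fun r _ => hterm r, Finset.sum_ite_eq' Finset.univ t _]
    simp
  · rw [if_neg hs]
    have hterm : ∀ x : Fin T × Fin d, N p x * emb t Q x (s, j)
        = if x = (s, j) then N p x else 0 := by
      intro x
      rw [emb_apply_ne t Q x hs j]
      by_cases h1 : x = (s, j) <;> simp [h1]
    rw [Finset.sum_congr rfl fun x _ => hterm x, Finset.sum_ite_eq' Finset.univ _ _]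
    simp

lemma frobInner_mul_emb (L N : Mat d T) (t : Fin T) (Q : Matrix (Fin d) (Fin d) ℝ) :
    frobInner L (N * emb t Q) = frobInner L N - (∑ x, ∑ p, N p (t, x) * L p (t, x))
      + ∑ a, ∑ b, (∑ p, N p (t, a) * L p (t, b)) * Q a b := by
  rw [frobInner, frobInner]
  have hsplit : ∀ X : Mat d T, (∑ p, ∑ q, L p q * X p q) = ∑ p, ∑ s, ∑ j, L p (s,j) * X p (s,j) := by
    intro X
    refine Finset.sum_congr rfl fun p _ => ?_
    rw [Fintype.sum_prod_type]
  rw [hsplit, hsplit]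
  have hp : ∀ p, (∑ s, ∑ j, L p (s,j) * (N * emb t Q) p (s,j))
      = (∑ s, ∑ j, L p (s,j) * N p (s,j)) - (∑ j, L p (t,j) * N p (t,j))
        + ∑ j, L p (t,j) * ∑ k, N p (t,k) * Q k j := by
    intro p
    have h1 : ∀ s, (∑ j, L p (s,j) * (N * emb t Q) p (s,j))
        = (∑ j, L p (s,j) * N p (s,j))
          + (if s = t then (∑ j, L p (t,j) * ∑ k, N p (t,k) * Q k j)
              - (∑ j, L p (t,j) * N p (t,j)) else 0) := by
      intro s
      rcases eq_or_ne s t with rfl | hst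
      · simp [mul_emb_apply]
        try ring
      · simp [mul_emb_apply, hst]
        try ring
    rw [Finset.sum_congr rfl fun s _ => h1 s, Finset.sum_add_distrib,
      Finset.sum_ite_eq' Finset.univ t _]
    simp only [Finset.mem_univ, if_true]
    ring
  rw [Finset.sum_congr rfl fun p _ => hp p, Finset.sum_add_distrib, Finset.sum_sub_distrib]
  congr 1
  · congr 1
    rw [Finset.sum_comm]
    exact Finset.sum_congr rfl fun j _ => Finset.sum_congr rfl fun p _ => by ring
  · calc ∑ p, ∑ j, L p (t,j) * ∑ k, N p (t,k) * Q k j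
        = ∑ j, ∑ k, ∑ p, N p (t,k) * L p (t,j) * Q k j := by
          rw [Finset.sum_comm]
          refine Finset.sum_congr rfl fun j _ => ?_
          have h2 : ∀ p, L p (t,j) * ∑ k, N p (t,k) * Q k j
              = ∑ k, N p (t,k) * L p (t,j) * Q k j := by
            intro p; rw [Finset.mul_sum]
            exact Finset.sum_congr rfl fun k _ => by ring
          rw [Finset.sum_congr rfl fun p _ => h2 p, Finset.sum_comm]
      _ = ∑ a, ∑ b, (∑ p, N p (t,a) * L p (t,b)) * Q a b := by
          rw [Finset.sum_comm]
          refine Finset.sum_congr rfl fun k _ => Finset.sum_congr rfl fun j _ => ?_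
          rw [Finset.sum_mul]

lemma vset_symm {L Vv : Mat d T} (hVv : Vv ∈ VSet L) (t : Fin T) :
    ∀ i j, blk (Vvᵀ * L) t i j = blk (Vvᵀ * L) t j i := by
  obtain ⟨M, P, hM, hP, rfl⟩ := hVv
  have hDm : ∀ i j, (∑ p, (M * P) p (t, i) * L p (t, j))
      = (∑ p, (M * P) p (t, j) * L p (t, i)) := by
    apply sym_of_maximal (D := fun i j => ∑ p, (M * P) p (t,i) * L p (t,j))
    intro Q hQ
    have hO : memO (P * emb t Q) := memO_mul hP.1 (memO_emb t hQ)
    have hle := frobInner_le_of_opt hP hO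
    rw [← Matrix.mul_assoc] at hle
    have hexp := frobInner_mul_emb L (M * P) t Q
    rw [hexp] at hle
    linarith
  have hblk : ∀ (X : Mat d T) (i j : Fin d), blk (Xᵀ * L) t i j = ∑ p, X p (t,i) * L p (t,j) := by
    intro X i j
    simp [blk, Matrix.mul_apply, Matrix.transpose_apply]
  intro i j
  rw [hblk, hblk]
  have hsplit2 : ∀ i j : Fin d, (∑ p, (M * P - L) p (t,i) * L p (t,j))
      = (∑ p, (M * P) p (t,i) * L p (t,j)) - ∑ p, L p (t,i) * L p (t,j) := by
    intro i j
    rw [← Finset.sum_sub_distrib]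
    refine Finset.sum_congr rfl fun p _ => ?_
    rw [Matrix.sub_apply]; ring
  rw [hsplit2, hsplit2, hDm i j]
  have hLL : (∑ p, L p (t,i) * L p (t,j)) = ∑ p, L p (t,j) * L p (t,i) :=
    Finset.sum_congr rfl fun p _ => by ring
  rw [hLL]

lemma eq_zero_of_abs_le_mul {x C : ℝ} (hC : 0 ≤ C) (h : ∀ ε : ℝ, 0 < ε → |x| ≤ C * ε) :
    x = 0 := by
  by_contra hx
  have h1 : 0 < |x| := abs_pos.mpr hx
  have h2 := h (|x| / (2 * (C + 1))) (by positivity)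
  have h4 : C / (2 * (C + 1)) < 1 := by
    rw [div_lt_one (by positivity)]; linarith
  have h5 : C * (|x| / (2 * (C + 1))) = |x| * (C / (2 * (C + 1))) := by ring
  have h6 : |x| * (C / (2 * (C + 1))) < |x| * 1 := mul_lt_mul_of_pos_left h4 h1
  rw [mul_one] at h6
  linarith [h5 ▸ h2]

lemma abs_sum_mul_le {ι : Type*} [Fintype ι] {f g : ι → ℝ} {cf cg : ℝ}
    (hf : ∀ i, |f i| ≤ cf) (hg : ∀ i, |g i| ≤ cg) :
    |∑ i, f i * g i| ≤ (Fintype.card ι : ℝ) * (cf * cg) := by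
  calc |∑ i, f i * g i| ≤ ∑ i, |f i * g i| := Finset.abs_sum_le_sum_abs _ _
    _ ≤ ∑ _i : ι, cf * cg := by
        refine Finset.sum_le_sum fun i _ => ?_
        rw [abs_mul]
        exact mul_le_mul (hf i) (hg i) (abs_nonneg _) ((abs_nonneg _).trans (hf i))
    _ = _ := by rw [Finset.sum_const, Finset.card_univ, nsmul_eq_mul]

lemma diffAt_finset_prod {ι : Type*} (s : Finset ι) (f : ι → ℝ → ℝ) (x : ℝ)
    (hf : ∀ i, DifferentiableAt ℝ (f i) x) :
    DifferentiableAt ℝ (fun u => ∏ i ∈ s, f i u) x := by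
  classical
  induction s using Finset.induction_on with
  | empty => simpa using differentiableAt_const (1 : ℝ)
  | insert a s h ih =>
      simp only [Finset.prod_insert h]
      exact (hf _).mul ih

lemma diffAt_det {ι : Type*} [Fintype ι] [DecidableEq ι] (f : ℝ → Matrix ι ι ℝ) (x : ℝ)
    (hf : ∀ i j, DifferentiableAt ℝ (fun u => f u i j) x) :
    DifferentiableAt ℝ (fun u => (f u).det) x := by
  simp only [Matrix.det_apply']
  exact DifferentiableAt.fun_sum fun σ _ =>
    (differentiableAt_const _).mul (diffAt_finset_prod _ _ _ fun i => hf _ _)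

lemma lyapunov {ι : Type*} [Fintype ι] [DecidableEq ι] (S K : Matrix ι ι ℝ)
    (hS : S.PosDef) (h : S * K + K * S = 0) : K = 0 := by
  have h1 : Kᵀ * (S * K) + Kᵀ * (K * S) = 0 := by
    rw [← Matrix.mul_add, h, Matrix.mul_zero]
  have h2 : Matrix.trace (Kᵀ * (S * K)) + Matrix.trace (Kᵀ * (K * S)) = 0 := by
    rw [← Matrix.trace_add, h1, Matrix.trace_zero]
  have hqc : Matrix.trace (Kᵀ * (S * K))
      = ∑ j, (fun a => K a j) ⬝ᵥ S.mulVec (fun a => K a j) := by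
    rw [Matrix.trace]
    refine Finset.sum_congr rfl fun j _ => ?_
    simp only [Matrix.diag_apply, Matrix.mul_apply, Matrix.transpose_apply,
      dotProduct, Matrix.mulVec]
  have hqr : Matrix.trace (Kᵀ * (K * S))
      = ∑ i, (fun a => K i a) ⬝ᵥ S.mulVec (fun a => K i a) := by
    have hassoc : Kᵀ * (K * S) = Kᵀ * K * S := by rw [Matrix.mul_assoc]
    rw [hassoc, ← Matrix.trace_mul_cycle K S Kᵀ, Matrix.trace]
    refine Finset.sum_congr rfl fun i _ => ?_
    simp only [Matrix.diag_apply, Matrix.mul_apply, Matrix.transpose_apply,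
      dotProduct, Matrix.mulVec]
    calc ∑ x, (∑ jj, K i jj * S jj x) * K i x
        = ∑ x, ∑ jj, K i jj * (S jj x * K i x) := by
          refine Finset.sum_congr rfl fun x _ => ?_
          rw [Finset.sum_mul]
          exact Finset.sum_congr rfl fun jj _ => by ring
      _ = ∑ jj, ∑ x, K i jj * (S jj x * K i x) := Finset.sum_comm
      _ = ∑ x, K i x * ∑ x1, S x x1 * K i x1 := by
          refine Finset.sum_congr rfl fun jj _ => ?_
          rw [← Finset.mul_sum]
  have hnn1 : ∀ j, 0 ≤ (fun a => K a j) ⬝ᵥ S.mulVec (fun a => K a j) := fun j => by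
    have := hS.posSemidef.dotProduct_mulVec_nonneg (fun a => K a j); simpa using this
  have hnn2 : ∀ i, 0 ≤ (fun a => K i a) ⬝ᵥ S.mulVec (fun a => K i a) := fun i => by
    have := hS.posSemidef.dotProduct_mulVec_nonneg (fun a => K i a); simpa using this
  have hsum : (∑ j, (fun a => K a j) ⬝ᵥ S.mulVec (fun a => K a j))
      + (∑ i, (fun a => K i a) ⬝ᵥ S.mulVec (fun a => K i a)) = 0 := by
    rw [← hqc, ← hqr]; exact h2
  have hz1 : ∑ j, (fun a => K a j) ⬝ᵥ S.mulVec (fun a => K a j) = 0 := by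
    have ha : 0 ≤ ∑ j, (fun a => K a j) ⬝ᵥ S.mulVec (fun a => K a j) :=
      Finset.sum_nonneg fun j _ => hnn1 j
    have hb : 0 ≤ ∑ i, (fun a => K i a) ⬝ᵥ S.mulVec (fun a => K i a) :=
      Finset.sum_nonneg fun i _ => hnn2 i
    linarith
  have hcz : ∀ j, (fun a => K a j) ⬝ᵥ S.mulVec (fun a => K a j) = 0 := fun j =>
    (Finset.sum_eq_zero_iff_of_nonneg (fun j _ => hnn1 j)).mp hz1 j (Finset.mem_univ j)
  ext a j
  by_contra hKaj
  have hxne : (fun a => K a j) ≠ 0 := by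
    intro hfe
    exact hKaj (by simpa using congrFun hfe a)
  have hlt : 0 < (fun a => K a j) ⬝ᵥ S.mulVec (fun a => K a j) := by
    have := hS.dotProduct_mulVec_pos hxne; simpa using this
  rw [hcz j] at hlt
  exact lt_irrefl _ hlt

end Stmt12Aux

open Stmt12Aux

/-- for regular `L`, the matrix `V ∈ 𝐕(L)` representing a constant speed
geodesic `u ↦ [L + uV]` emanating from `[L]` is unique. -/
theorem stmt12 (d T : ℕ) (hd : 0 < d) (hT : 0 < T) (L V W : Mat d T)
    (hL : L ∈ LReg) (hV : V ∈ VSet L) (hW : W ∈ VSet L)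
    (h : ∀ u ∈ Set.Icc (0 : ℝ) 1, dABW (L + u • V) (L + u • W) = 0) :
    V = W := by
  classical
  obtain ⟨hLlow, hLpd⟩ := hL
  have hVsym : ∀ (t : Fin T) (i j : Fin d), blk (Vᵀ * L) t i j = blk (Vᵀ * L) t j i :=
    fun t => vset_symm hV t
  have hWsym : ∀ (t : Fin T) (i j : Fin d), blk (Wᵀ * L) t i j = blk (Wᵀ * L) t j i :=
    fun t => vset_symm hW t
  have key : ∀ t : Fin T, ∀ p (j : Fin d), V p (t, j) = W p (t, j) := by
    intro t
    set A : ℝ → Mat d T := fun u => L + u • V with hA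
    set B : ℝ → Mat d T := fun u => L + u • W with hB
    have hAapp : ∀ (u : ℝ) p q, A u p q = L p q + u * V p q := by
      intro u p q; simp [hA, Matrix.add_apply, Matrix.smul_apply, smul_eq_mul]
    have hBapp : ∀ (u : ℝ) p q, B u p q = L p q + u * W p q := by
      intro u p q; simp [hB, Matrix.add_apply, Matrix.smul_apply, smul_eq_mul]
    set S : ℝ → Matrix (Fin d) (Fin d) ℝ := fun u => blk ((B u)ᵀ * (B u)) t with hS
    set G : ℝ → Matrix (Fin d) (Fin d) ℝ := fun u => blk ((B u)ᵀ * (A u)) t with hG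
    have hSapp : ∀ (u : ℝ) i j, S u i j = ∑ p, B u p (t, i) * B u p (t, j) := by
      intro u i j; simp [hS, blk, Matrix.mul_apply, Matrix.transpose_apply]
    have hGapp : ∀ (u : ℝ) i j, G u i j = ∑ p, B u p (t, i) * A u p (t, j) := by
      intro u i j; simp [hG, blk, Matrix.mul_apply, Matrix.transpose_apply]
    have hB0 : B 0 = L := by ext p q; rw [hBapp]; ring
    have hA0 : A 0 = L := by ext p q; rw [hAapp]; ring
    have hS0 : S 0 = blk (Lᵀ * L) t := by rw [hS]; simp only; rw [hB0]
    have hS0pd : (S 0).PosDef := by rw [hS0]; exact hLpd t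
    have hdet0 : (S 0).det ≠ 0 := hS0pd.det_pos.ne'
    have hdSentry : ∀ (i j : Fin d) (x : ℝ), DifferentiableAt ℝ (fun u => S u i j) x := by
      intro i j x
      have hrw : (fun u => S u i j)
          = fun u => ∑ p, (L p (t,i) + u * W p (t,i)) * (L p (t,j) + u * W p (t,j)) := by
        funext u; rw [hSapp]
        exact Finset.sum_congr rfl fun p _ => by rw [hBapp, hBapp]
      rw [hrw]
      exact DifferentiableAt.fun_sum fun p _ =>
        ((differentiableAt_const _).add (differentiableAt_fun_id.mul_const _)).mul
          ((differentiableAt_const _).add (differentiableAt_fun_id.mul_const _))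
    have hdGentry : ∀ (i j : Fin d) (x : ℝ), DifferentiableAt ℝ (fun u => G u i j) x := by
      intro i j x
      have hrw : (fun u => G u i j)
          = fun u => ∑ p, (L p (t,i) + u * W p (t,i)) * (L p (t,j) + u * V p (t,j)) := by
        funext u; rw [hGapp]
        exact Finset.sum_congr rfl fun p _ => by rw [hBapp, hAapp]
      rw [hrw]
      exact DifferentiableAt.fun_sum fun p _ =>
        ((differentiableAt_const _).add (differentiableAt_fun_id.mul_const _)).mul
          ((differentiableAt_const _).add (differentiableAt_fun_id.mul_const _))
    have hScont : Continuous fun u => S u :=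
      continuous_matrix fun i j => Differentiable.continuous fun x => hdSentry i j x
    have hdet_cont : Continuous fun u => (S u).det := hScont.matrix_det
    have hev : ∀ᶠ u in nhds (0:ℝ), (S u).det ≠ 0 :=
      hdet_cont.continuousAt.eventually_ne hdet0
    obtain ⟨r, hr0, hrball⟩ := Metric.eventually_nhds_iff.mp hev
    set δ : ℝ := min (r/2) 1 with hδdef
    have hδ0 : 0 < δ := lt_min (by linarith) one_pos
    have hδ1 : δ ≤ 1 := min_le_right _ _
    have hdet : ∀ u ∈ Set.Icc (0:ℝ) δ, (S u).det ≠ 0 := by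
      intro u hu
      apply hrball
      rw [Real.dist_eq, sub_zero, abs_of_nonneg hu.1]
      calc u ≤ δ := hu.2
        _ ≤ r/2 := min_le_left _ _
        _ < r := by linarith
    have h0mem : (0:ℝ) ∈ Set.Icc (0:ℝ) δ := ⟨le_refl _, hδ0.le⟩
    set Φ : ℝ → Matrix (Fin d) (Fin d) ℝ := fun u => (S u)⁻¹ * G u with hΦ
    have hSinv : ∀ u ∈ Set.Icc (0:ℝ) δ, (S u)⁻¹ * S u = 1 := fun u hu =>
      Matrix.nonsing_inv_mul _ (isUnit_iff_ne_zero.mpr (hdet u hu))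
    have hmain : ∀ u ∈ Set.Icc (0:ℝ) δ,
        (∀ p (j : Fin d), A u p (t, j) = ∑ k, B u p (t, k) * Φ u k j)
        ∧ (∀ i j : Fin d, (∑ k, Φ u k i * Φ u k j) = if i = j then 1 else 0) := by
      intro u hu
      have hd0 : dABW (A u) (B u) = 0 := h u ⟨hu.1, hu.2.trans hδ1⟩
      set CB := frobNorm (B u) with hCBdef
      set CS := frobNorm ((S u)⁻¹) with hCSdef
      set CF := frobNorm (Φ u) with hCFdef
      have hCB : 0 ≤ CB := frobNorm_nonneg' _
      have hCS : 0 ≤ CS := frobNorm_nonneg' _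
      have hCF : 0 ≤ CF := frobNorm_nonneg' _
      set n : ℝ := (Fintype.card (Fin T × Fin d) : ℝ) with hndef
      have hn : 0 ≤ n := Nat.cast_nonneg _
      set C1 : ℝ := 1 + (d:ℝ) * (CB * ((d:ℝ) * (CS * (n * CB)))) with hC1def
      set C2 : ℝ := (d:ℝ) * (CF * ((d:ℝ) * (CS * (n * CB))))
          + (d:ℝ) * (((d:ℝ) * (CS * (n * CB))) * 1) with hC2def
      have hq : 0 ≤ (d:ℝ) * (CS * (n * CB)) :=
        mul_nonneg (Nat.cast_nonneg _) (mul_nonneg hCS (mul_nonneg hn hCB))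
      have hC1 : 0 ≤ C1 := by
        have h1 : 0 ≤ (d:ℝ) * (CB * ((d:ℝ) * (CS * (n * CB)))) :=
          mul_nonneg (Nat.cast_nonneg _) (mul_nonneg hCB hq)
        rw [hC1def]; linarith
      have hC2 : 0 ≤ C2 := by
        have h2 : 0 ≤ (d:ℝ) * (CF * ((d:ℝ) * (CS * (n * CB)))) :=
          mul_nonneg (Nat.cast_nonneg _) (mul_nonneg hCF hq)
        have h3 : 0 ≤ (d:ℝ) * (((d:ℝ) * (CS * (n * CB))) * 1) :=
          mul_nonneg (Nat.cast_nonneg _) (by rw [mul_one]; exact hq)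
        rw [hC2def]; linarith
      have hfacts : ∀ ε : ℝ, 0 < ε →
          (∀ p (j : Fin d), |A u p (t,j) - ∑ k, B u p (t,k) * Φ u k j| ≤ C1 * ε)
          ∧ (∀ i j : Fin d, |(∑ k, Φ u k i * Φ u k j) - (if i = j then 1 else 0)| ≤ C2 * ε) := by
        intro ε hε
        obtain ⟨O, hO, hOlt⟩ := exists_memO_close hd0 hε
        set Ot : Matrix (Fin d) (Fin d) ℝ := fun k l => O (t, k) (t, l) with hOtdef
        have hΔ : ∀ p q, |(A u - B u * O) p q| ≤ ε :=
          fun p q => (abs_entry_le_frobNorm _ p q).trans hOlt.le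
        have hBO : ∀ p (j : Fin d), (B u * O) p (t, j) = ∑ k, B u p (t, k) * Ot k j := by
          intro p j
          rw [Matrix.mul_apply, Fintype.sum_prod_type]
          have hz : ∀ s : Fin T, (∑ k, B u p (s,k) * O (s,k) (t,j))
              = if s = t then ∑ k, B u p (t,k) * Ot k j else 0 := by
            intro s
            rcases eq_or_ne s t with rfl | hst
            · rw [if_pos rfl]
            · rw [if_neg hst]
              exact Finset.sum_eq_zero fun k _ => by rw [hO.1 s t k j hst, mul_zero]
          rw [Finset.sum_congr rfl fun s _ => hz s, Finset.sum_ite_eq' Finset.univ t _]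
          simp
        have hOtO : ∀ i j : Fin d, (∑ k, Ot k i * Ot k j) = if i = j then 1 else 0 := by
          intro i j
          have h1 := congrFun (congrFun hO.2 (t, i)) (t, j)
          rw [Matrix.mul_apply, Fintype.sum_prod_type] at h1
          have hz : ∀ s : Fin T, (∑ k, Oᵀ (t,i) (s,k) * O (s,k) (t,j))
              = if s = t then ∑ k, Ot k i * Ot k j else 0 := by
            intro s
            rcases eq_or_ne s t with rfl | hst
            · rw [if_pos rfl]
              exact Finset.sum_congr rfl fun k _ => by
                rw [Matrix.transpose_apply]
            · rw [if_neg hst]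
              exact Finset.sum_eq_zero fun k _ => by
                rw [Matrix.transpose_apply, hO.1 s t k i hst, zero_mul]
          rw [Finset.sum_congr rfl fun s _ => hz s, Finset.sum_ite_eq' Finset.univ t _] at h1
          simp only [Finset.mem_univ, if_true] at h1
          rw [h1, Matrix.one_apply]
          by_cases hij : i = j
          · simp [hij]
          · simp [hij, Prod.ext_iff]
        have hOt1 : ∀ k j, |Ot k j| ≤ 1 := by
          intro k j
          have h1 := hOtO j j
          rw [if_pos rfl] at h1
          have h3 := Finset.single_le_sum (f := fun k' => Ot k' j * Ot k' j)
            (fun k' _ => mul_self_nonneg _) (Finset.mem_univ k)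
          rw [h1] at h3
          exact abs_le_one_iff_mul_self_le_one.mpr h3
        have hGSO : ∀ i j : Fin d, |(G u - S u * Ot) i j| ≤ n * (CB * ε) := by
          intro i j
          have hSOt : (∑ k, S u i k * Ot k j) = ∑ p, B u p (t,i) * (B u * O) p (t,j) := by
            calc (∑ k, S u i k * Ot k j)
                = ∑ k, ∑ p, B u p (t,i) * B u p (t,k) * Ot k j := by
                  refine Finset.sum_congr rfl fun k _ => ?_
                  rw [hSapp, Finset.sum_mul]
              _ = ∑ p, ∑ k, B u p (t,i) * B u p (t,k) * Ot k j := Finset.sum_comm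
              _ = ∑ p, B u p (t,i) * (B u * O) p (t,j) := by
                  refine Finset.sum_congr rfl fun p _ => ?_
                  rw [hBO, Finset.mul_sum]
                  exact Finset.sum_congr rfl fun k _ => by ring
          have hrew : (G u - S u * Ot) i j = ∑ p, B u p (t,i) * (A u - B u * O) p (t,j) := by
            rw [Matrix.sub_apply, Matrix.mul_apply, hGapp, hSOt, ← Finset.sum_sub_distrib]
            refine Finset.sum_congr rfl fun p _ => ?_
            rw [Matrix.sub_apply]; ring
          rw [hrew]
          exact abs_sum_mul_le (f := fun p => B u p (t,i))
            (g := fun p => (A u - B u * O) p (t,j)) (cf := CB) (cg := ε)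
            (fun p => abs_entry_le_frobNorm _ _ _) (fun p => hΔ _ _)
        have hΦOt_mat : Φ u - Ot = (S u)⁻¹ * (G u - S u * Ot) := by
          rw [Matrix.mul_sub, ← Matrix.mul_assoc, hSinv u hu, Matrix.one_mul]
        have hΦOt : ∀ k j, |(Φ u - Ot) k j| ≤ (d:ℝ) * (CS * (n * (CB * ε))) := by
          intro k j
          rw [hΦOt_mat, Matrix.mul_apply]
          have h4 := abs_sum_mul_le (f := fun m => (S u)⁻¹ k m)
            (g := fun m => (G u - S u * Ot) m j) (cf := CS) (cg := n * (CB * ε))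
            (fun m => abs_entry_le_frobNorm _ _ _) (fun m => hGSO m j)
          calc |∑ m, (S u)⁻¹ k m * (G u - S u * Ot) m j|
              ≤ (Fintype.card (Fin d) : ℝ) * (CS * (n * (CB * ε))) := h4
            _ = (d:ℝ) * (CS * (n * (CB * ε))) := by rw [Fintype.card_fin]
        constructor
        · intro p j
          have hrew : A u p (t,j) - ∑ k, B u p (t,k) * Φ u k j
              = (A u - B u * O) p (t,j) + ∑ k, B u p (t,k) * ((Ot - Φ u) k j) := by
            have h5 : (∑ k, B u p (t,k) * ((Ot - Φ u) k j))
                = (∑ k, B u p (t,k) * Ot k j) - ∑ k, B u p (t,k) * Φ u k j := by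
              rw [← Finset.sum_sub_distrib]
              exact Finset.sum_congr rfl fun k _ => by rw [Matrix.sub_apply]; ring
            rw [h5, Matrix.sub_apply, hBO]
            ring
          rw [hrew]
          calc |(A u - B u * O) p (t,j) + ∑ k, B u p (t,k) * ((Ot - Φ u) k j)|
              ≤ |(A u - B u * O) p (t,j)| + |∑ k, B u p (t,k) * ((Ot - Φ u) k j)| :=
                abs_add_le _ _
            _ ≤ ε + (d:ℝ) * (CB * ((d:ℝ) * (CS * (n * (CB * ε))))) := by
                refine add_le_add (hΔ _ _) ?_
                have h6 := abs_sum_mul_le (f := fun k => B u p (t,k))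
                  (g := fun k => (Ot - Φ u) k j) (cf := CB)
                  (cg := (d:ℝ) * (CS * (n * (CB * ε))))
                  (fun k => abs_entry_le_frobNorm _ _ _)
                  (fun k => by
                    show |(Ot - Φ u) k j| ≤ _
                    have h7 : (Ot - Φ u) k j = -((Φ u - Ot) k j) := by
                      simp [Matrix.sub_apply]
                    rw [h7, abs_neg]; exact hΦOt k j)
                calc |∑ k, B u p (t,k) * ((Ot - Φ u) k j)|
                    ≤ (Fintype.card (Fin d) : ℝ) * (CB * ((d:ℝ) * (CS * (n * (CB * ε))))) := h6
                  _ = (d:ℝ) * (CB * ((d:ℝ) * (CS * (n * (CB * ε))))) := by rw [Fintype.card_fin]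
            _ = C1 * ε := by rw [hC1def]; ring
        · intro i j
          have hrew : (∑ k, Φ u k i * Φ u k j) - (if i = j then 1 else 0)
              = (∑ k, Φ u k i * ((Φ u - Ot) k j)) + ∑ k, ((Φ u - Ot) k i) * Ot k j := by
            rw [← hOtO i j, ← Finset.sum_add_distrib, ← Finset.sum_sub_distrib]
            exact Finset.sum_congr rfl fun k _ => by rw [Matrix.sub_apply, Matrix.sub_apply]; ring
          rw [hrew]
          calc |(∑ k, Φ u k i * ((Φ u - Ot) k j)) + ∑ k, ((Φ u - Ot) k i) * Ot k j|
              ≤ |∑ k, Φ u k i * ((Φ u - Ot) k j)| + |∑ k, ((Φ u - Ot) k i) * Ot k j| :=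
                abs_add_le _ _
            _ ≤ (d:ℝ) * (CF * ((d:ℝ) * (CS * (n * (CB * ε)))))
                + (d:ℝ) * (((d:ℝ) * (CS * (n * (CB * ε)))) * 1) := by
                refine add_le_add ?_ ?_
                · have h6 := abs_sum_mul_le (f := fun k => Φ u k i)
                    (g := fun k => (Φ u - Ot) k j) (cf := CF)
                    (cg := (d:ℝ) * (CS * (n * (CB * ε))))
                    (fun k => abs_entry_le_frobNorm _ _ _) (fun k => hΦOt k j)
                  calc |∑ k, Φ u k i * ((Φ u - Ot) k j)|
                      ≤ (Fintype.card (Fin d) : ℝ) * (CF * ((d:ℝ) * (CS * (n * (CB * ε))))) := h6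
                    _ = _ := by rw [Fintype.card_fin]
                · have h6 := abs_sum_mul_le (f := fun k => (Φ u - Ot) k i)
                    (g := fun k => Ot k j) (cf := (d:ℝ) * (CS * (n * (CB * ε)))) (cg := 1)
                    (fun k => hΦOt k i) (fun k => hOt1 k j)
                  calc |∑ k, ((Φ u - Ot) k i) * Ot k j|
                      ≤ (Fintype.card (Fin d) : ℝ) * (((d:ℝ) * (CS * (n * (CB * ε)))) * 1) := h6
                    _ = _ := by rw [Fintype.card_fin]
            _ = C2 * ε := by rw [hC2def]; ring
      constructor
      · intro p j
        exact sub_eq_zero.mp (eq_zero_of_abs_le_mul hC1 (fun ε hε => (hfacts ε hε).1 p j))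
      · intro i j
        exact sub_eq_zero.mp (eq_zero_of_abs_le_mul hC2 (fun ε hε => (hfacts ε hε).2 i j))
    have hdinv : ∀ i j : Fin d, DifferentiableAt ℝ (fun u => (S u)⁻¹ i j) 0 := by
      intro i j
      have hrw : (fun u => (S u)⁻¹ i j) = fun u => ((S u).det)⁻¹ * (S u).adjugate i j := by
        funext u
        rw [Matrix.inv_def, Matrix.smul_apply, smul_eq_mul, Ring.inverse_eq_inv']
      rw [hrw]
      have hadj : DifferentiableAt ℝ (fun u => (S u).adjugate i j) 0 := by
        have hrw2 : (fun u => (S u).adjugate i j)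
            = fun u => ((S u).updateRow j (Pi.single i 1)).det := by
          funext u; rw [Matrix.adjugate_apply]
        rw [hrw2]
        apply diffAt_det
        intro a b
        have hrw3 : (fun u => (S u).updateRow j (Pi.single i 1) a b)
            = fun u => if a = j then (Pi.single i 1 : Fin d → ℝ) b else S u a b := by
          funext u; rw [Matrix.updateRow_apply]
        rw [hrw3]
        rcases eq_or_ne a j with rfl | ha
        · simp only [if_pos rfl]; exact differentiableAt_const _
        · simp only [if_neg ha]; exact hdSentry a b 0
      exact ((diffAt_det _ _ fun a b => hdSentry a b 0).inv hdet0).mul hadj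
    have hdΦ : ∀ i j : Fin d, DifferentiableAt ℝ (fun u => Φ u i j) 0 := by
      intro i j
      have hrw : (fun u => Φ u i j) = fun u => ∑ k, (S u)⁻¹ i k * G u k j := by
        funext u; rw [hΦ]; simp only; rw [Matrix.mul_apply]
      rw [hrw]
      exact DifferentiableAt.fun_sum fun k _ => (hdinv i k).mul (hdGentry k j 0)
    set K : Matrix (Fin d) (Fin d) ℝ := fun i j => deriv (fun u => Φ u i j) 0 with hK
    have hKd : ∀ i j : Fin d, HasDerivAt (fun u => Φ u i j) (K i j) 0 := fun i j =>
      (hdΦ i j).hasDerivAt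
    have hΦ0 : ∀ k j : Fin d, Φ 0 k j = if k = j then 1 else 0 := by
      have hG0 : G 0 = S 0 := by
        ext i j; rw [hGapp, hSapp, hA0, hB0]
      have hΦ01 : Φ 0 = 1 := by
        rw [hΦ]; simp only; rw [hG0]
        exact hSinv 0 h0mem
      intro k j; rw [hΦ01, Matrix.one_apply]
    have hUD : UniqueDiffWithinAt ℝ (Set.Icc (0:ℝ) δ) 0 := (uniqueDiffOn_Icc hδ0) 0 h0mem
    have hVW : ∀ p (j : Fin d), V p (t, j) = W p (t, j) + ∑ k, L p (t, k) * K k j := by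
      intro p j
      have hf1 : HasDerivAt (fun u => A u p (t,j) - ∑ k, B u p (t,k) * Φ u k j)
          (V p (t,j) - ∑ k, (W p (t,k) * Φ 0 k j + L p (t,k) * K k j)) 0 := by
        apply HasDerivAt.sub
        · have hrw : (fun u => A u p (t,j)) = fun u => L p (t,j) + u * V p (t,j) := by
            funext u; rw [hAapp]
          rw [hrw]
          simpa using ((hasDerivAt_id (0:ℝ)).mul_const (V p (t,j))).const_add (L p (t,j))
        · have heach : ∀ k : Fin d, HasDerivAt (fun u => B u p (t,k) * Φ u k j)
              (W p (t,k) * Φ 0 k j + L p (t,k) * K k j) 0 := by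
            intro k
            have h1 : HasDerivAt (fun u => B u p (t,k)) (W p (t,k)) 0 := by
              have hrw : (fun u => B u p (t,k)) = fun u => L p (t,k) + u * W p (t,k) := by
                funext u; rw [hBapp]
              rw [hrw]
              simpa using ((hasDerivAt_id (0:ℝ)).mul_const (W p (t,k))).const_add (L p (t,k))
            have h2 := h1.mul (hKd k j)
            have hBval : B 0 p (t,k) = L p (t,k) := by rw [hBapp]; ring
            rw [hBval] at h2
            exact h2
          exact HasDerivAt.fun_sum fun k _ => heach k
      have hzero : HasDerivWithinAt (fun u => A u p (t,j) - ∑ k, B u p (t,k) * Φ u k j)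
          0 (Set.Icc (0:ℝ) δ) 0 := by
        apply (hasDerivWithinAt_const (0:ℝ) (Set.Icc (0:ℝ) δ) (0:ℝ)).congr
        · intro x hx; exact sub_eq_zero.mpr ((hmain x hx).1 p j)
        · exact sub_eq_zero.mpr ((hmain 0 h0mem).1 p j)
      have heq := UniqueDiffWithinAt.eq_deriv _ hUD hf1.hasDerivWithinAt hzero
      have hΦ0sum : ∑ k, W p (t,k) * Φ 0 k j = W p (t,j) := by
        have : ∀ k : Fin d, W p (t,k) * Φ 0 k j = if k = j then W p (t,k) else 0 := by
          intro k; rw [hΦ0]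
          by_cases hkj : k = j <;> simp [hkj]
        rw [Finset.sum_congr rfl fun k _ => this k, Finset.sum_ite_eq' Finset.univ j _]
        simp
      rw [Finset.sum_add_distrib, hΦ0sum] at heq
      linarith [heq]
    have hskew : ∀ i j : Fin d, K j i + K i j = 0 := by
      intro i j
      have hf2 : HasDerivAt (fun u => ∑ k, Φ u k i * Φ u k j)
          (∑ k, (K k i * Φ 0 k j + Φ 0 k i * K k j)) 0 :=
        HasDerivAt.fun_sum fun k _ => (hKd k i).mul (hKd k j)
      have hconst : HasDerivWithinAt (fun u => ∑ k, Φ u k i * Φ u k j)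
          0 (Set.Icc (0:ℝ) δ) 0 := by
        apply (hasDerivWithinAt_const (0:ℝ) (Set.Icc (0:ℝ) δ)
          (if i = j then (1:ℝ) else 0)).congr
        · intro x hx; exact (hmain x hx).2 i j
        · exact (hmain 0 h0mem).2 i j
      have heq := UniqueDiffWithinAt.eq_deriv _ hUD hf2.hasDerivWithinAt hconst
      have e1 : ∑ k, K k i * Φ 0 k j = K j i := by
        have : ∀ k : Fin d, K k i * Φ 0 k j = if k = j then K k i else 0 := by
          intro k; rw [hΦ0]; by_cases hkj : k = j <;> simp [hkj]
        rw [Finset.sum_congr rfl fun k _ => this k, Finset.sum_ite_eq' Finset.univ j _]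
        simp
      have e2 : ∑ k, Φ 0 k i * K k j = K i j := by
        have : ∀ k : Fin d, Φ 0 k i * K k j = if k = i then K k j else 0 := by
          intro k; rw [hΦ0]; by_cases hki : k = i <;> simp [hki]
        rw [Finset.sum_congr rfl fun k _ => this k, Finset.sum_ite_eq' Finset.univ i _]
        simp
      rw [Finset.sum_add_distrib, e1, e2] at heq
      linarith [heq]
    -- symmetry of K^T S0
    have hS0app : ∀ i j : Fin d, blk (Lᵀ * L) t i j = ∑ p, L p (t,i) * L p (t,j) := by
      intro i j; simp [blk, Matrix.mul_apply, Matrix.transpose_apply]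
    have hblkX : ∀ (X : Mat d T) (i j : Fin d),
        blk (Xᵀ * L) t i j = ∑ p, X p (t,i) * L p (t,j) := by
      intro X i j; simp [blk, Matrix.mul_apply, Matrix.transpose_apply]
    have hE : ∀ i j : Fin d, (∑ p, V p (t,i) * L p (t,j)) - (∑ p, W p (t,i) * L p (t,j))
        = ∑ k, K k i * (blk (Lᵀ * L) t k j) := by
      intro i j
      rw [← Finset.sum_sub_distrib]
      have h1 : ∀ p, V p (t,i) * L p (t,j) - W p (t,i) * L p (t,j)
          = ∑ k, K k i * (L p (t,k) * L p (t,j)) := by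
        intro p
        rw [hVW p i, add_mul, add_sub_cancel_left, Finset.sum_mul]
        exact Finset.sum_congr rfl fun k _ => by ring
      rw [Finset.sum_congr rfl fun p _ => h1 p, Finset.sum_comm]
      refine Finset.sum_congr rfl fun k _ => ?_
      rw [hS0app, Finset.mul_sum]
    have hsymdiff : ∀ i j : Fin d, (∑ k, K k i * blk (Lᵀ * L) t k j)
        = ∑ k, K k j * blk (Lᵀ * L) t k i := by
      intro i j
      have hv : (∑ p, V p (t,i) * L p (t,j)) = ∑ p, V p (t,j) * L p (t,i) := by
        have := hVsym t i j
        rwa [hblkX, hblkX] at this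
      have hw : (∑ p, W p (t,i) * L p (t,j)) = ∑ p, W p (t,j) * L p (t,i) := by
        have := hWsym t i j
        rwa [hblkX, hblkX] at this
      have h1 := hE i j
      have h2 := hE j i
      linarith [h1, h2]
    have hS0symm : ∀ i j : Fin d, blk (Lᵀ * L) t i j = blk (Lᵀ * L) t j i := by
      intro i j; rw [hS0app, hS0app]
      exact Finset.sum_congr rfl fun p _ => by ring
    have hlyap : blk (Lᵀ * L) t * K + K * blk (Lᵀ * L) t = 0 := by
      ext i j
      rw [Matrix.add_apply, Matrix.mul_apply, Matrix.mul_apply, Matrix.zero_apply]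
      have h1 : (∑ k, blk (Lᵀ * L) t i k * K k j) = ∑ k, K k j * blk (Lᵀ * L) t k i := by
        exact Finset.sum_congr rfl fun k _ => by rw [hS0symm i k]; ring
      have h2 : (∑ k, K i k * blk (Lᵀ * L) t k j) = - ∑ k, K k i * blk (Lᵀ * L) t k j := by
        rw [← Finset.sum_neg_distrib]
        exact Finset.sum_congr rfl fun k _ => by
          have := hskew k i
          have hik : K i k = -K k i := by linarith
          rw [hik]; ring
      rw [h1, h2, ← hsymdiff i j]
      ring
    have hK0 : K = 0 := lyapunov _ _ (hLpd t) hlyap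
    intro p j
    rw [hVW p j, hK0]
    simp
  ext p q
  obtain ⟨t, j⟩ := q
  exact key t p j
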